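/- Let f : ℝ → ℝ be strictly antitone on (0, ∞), let V* > 0 satisfy f(V*) = 0, and let γ > 0. Suppose x : ℝ → ℝ is differentiable with x(t) > 0 and x′(t) = γ·f(x(t)) for all t ≥ 0. Then x(t) → V* as t → ∞. -/

import Mathlib

open Filter

/-- If the derivative of a differentiable function is `≤ -c` on `[0,∞)`,
then the function decays at least linearly. -/
lemma lin_bound_aux (x : ℝ → ℝ) (hx : Differentiable ℝ x) (c : ℝ)
    (h : ∀ t ≥ (0:ℝ), deriv x t ≤ -c) : ∀ t ≥ (0:ℝ), x t ≤ x 0 - c * t := by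
  intro t ht
  have hd : ∀ s : ℝ, HasDerivAt (fun u => x u + c * u) (deriv x s + c) s := by
    intro s
    exact ((hx s).hasDerivAt.add ((hasDerivAt_id' s).const_mul c)).congr_deriv (by ring)
  have hy : AntitoneOn (fun u => x u + c * u) (Set.Ici (0:ℝ)) := by
    apply antitoneOn_of_deriv_nonpos (convex_Ici 0)
    · exact (hx.continuous.add (continuous_const.mul continuous_id)).continuousOn
    · exact fun s _ => ((hd s).differentiableAt).differentiableWithinAt
    · intro s hs
      rw [interior_Ici] at hs
      rw [(hd s).deriv]
      have := h s (le_of_lt hs)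
      linarith
  have := hy (Set.self_mem_Ici) (Set.mem_Ici.2 ht) ht
  simp at this
  linarith

theorem scalar_ode_convergence
    (f : ℝ → ℝ) (hf : StrictAntiOn f (Set.Ioi 0))
    (Vstar : ℝ) (hVstar : 0 < Vstar) (hfzero : f Vstar = 0)
    (γ : ℝ) (hγ : 0 < γ)
    (x : ℝ → ℝ) (hx : Differentiable ℝ x)
    (hpos : ∀ t ≥ (0:ℝ), 0 < x t)
    (hx' : ∀ t ≥ (0:ℝ), deriv x t = γ * f (x t)) :
    Tendsto x atTop (nhds Vstar) := by
  have hVmem : Vstar ∈ Set.Ioi (0:ℝ) := hVstar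
  by_cases hcross : ∃ t0 ≥ (0:ℝ), x t0 = Vstar
  · -- x hits Vstar at t0; show it stays there, using (x - Vstar)² nonincreasing
    obtain ⟨t0, ht0, heq⟩ := hcross
    have hconst : ∀ t ≥ t0, x t = Vstar := by
      intro t ht
      have hgd : ∀ s : ℝ, HasDerivAt (fun u => (x u - Vstar) * (x u - Vstar))
          (deriv x s * (x s - Vstar) + (x s - Vstar) * deriv x s) s := by
        intro s
        exact ((hx s).hasDerivAt.sub_const Vstar).mul ((hx s).hasDerivAt.sub_const Vstar)
      have hg : AntitoneOn (fun u => (x u - Vstar) * (x u - Vstar)) (Set.Ici t0) := by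
        apply antitoneOn_of_deriv_nonpos (convex_Ici t0)
        · exact ((hx.continuous.sub continuous_const).mul
            (hx.continuous.sub continuous_const)).continuousOn
        · exact fun s _ => ((hgd s).differentiableAt).differentiableWithinAt
        · intro s hs
          rw [interior_Ici] at hs
          have hs0 : (0:ℝ) ≤ s := le_trans ht0 (le_of_lt hs)
          rw [(hgd s).deriv, hx' s hs0]
          have hxs : x s ∈ Set.Ioi (0:ℝ) := hpos s hs0
          rcases lt_trichotomy (x s) Vstar with hlt | heq2 | hgt
          · have hflt : 0 < f (x s) := by
              have := hf hxs hVmem hlt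
              linarith [hfzero ▸ this]
            nlinarith [mul_neg_of_pos_of_neg (mul_pos hγ hflt) (by linarith : x s - Vstar < 0)]
          · rw [heq2]; ring_nf; simp
          · have hflt : f (x s) < 0 := by
              have := hf hVmem hxs hgt
              linarith [hfzero ▸ this]
            nlinarith [mul_neg_of_neg_of_pos (mul_neg_of_pos_of_neg hγ hflt) (by linarith : 0 < x s - Vstar)]
      have h1 := hg (Set.self_mem_Ici) (Set.mem_Ici.2 ht) ht
      have h2 : (0:ℝ) ≤ (x t - Vstar) * (x t - Vstar) := mul_self_nonneg _
      have h3 : (x t0 - Vstar) * (x t0 - Vstar) = 0 := by rw [heq]; ring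
      have h4 : (x t - Vstar) * (x t - Vstar) = 0 := le_antisymm (by rw [← h3]; exact h1) h2
      have := mul_self_eq_zero.mp h4
      linarith
    have hev : (fun _ : ℝ => Vstar) =ᶠ[atTop] x :=
      eventually_atTop.2 ⟨t0, fun t ht => (hconst t ht).symm⟩
    exact Tendsto.congr' hev tendsto_const_nhds
  · push_neg at hcross
    -- sign constancy
    have hside : (∀ t ≥ (0:ℝ), Vstar < x t) ∨ (∀ t ≥ (0:ℝ), x t < Vstar) := by
      by_contra h
      push_neg at h
      obtain ⟨⟨t1, ht1, h1⟩, ⟨t2, ht2, h2⟩⟩ := h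
      have h1' : x t1 < Vstar := lt_of_le_of_ne h1 (hcross t1 ht1)
      have h2' : Vstar < x t2 := lt_of_le_of_ne h2 (Ne.symm (hcross t2 ht2))
      rcases le_total t1 t2 with hle | hle
      · have := intermediate_value_Icc hle hx.continuous.continuousOn
          (Set.mem_Icc.2 ⟨le_of_lt h1', le_of_lt h2'⟩)
        obtain ⟨s, hs, hsx⟩ := this
        exact hcross s (le_trans ht1 hs.1) hsx
      · have := intermediate_value_Icc' hle hx.continuous.continuousOn
          (Set.mem_Icc.2 ⟨le_of_lt h1', le_of_lt h2'⟩)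
        obtain ⟨s, hs, hsx⟩ := this
        exact hcross s (le_trans ht2 hs.1) hsx
    rcases hside with habove | hbelow
    · -- x > Vstar everywhere: x strictly decreasing, converges to inf L ≥ Vstar
      have hderiv_neg : ∀ s ∈ Set.Ioi (0:ℝ), deriv x s < 0 := by
        intro s hs
        have hs0 : (0:ℝ) ≤ s := le_of_lt hs
        have : f (x s) < f Vstar := hf hVmem (hpos s hs0) (habove s hs0)
        rw [hx' s hs0]
        rw [hfzero] at this
        exact mul_neg_of_pos_of_neg hγ this
      have hanti : StrictAntiOn x (Set.Ici (0:ℝ)) :=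
        strictAntiOn_of_deriv_neg (convex_Ici 0) hx.continuous.continuousOn
          (fun s hs => hderiv_neg s (by rwa [interior_Ici] at hs))
      set u : ℝ → ℝ := fun t => x (max t 0) with hu_def
      have hu_anti : Antitone u := fun a b hab =>
        hanti.antitoneOn (Set.mem_Ici.2 (le_max_right a 0)) (Set.mem_Ici.2 (le_max_right b 0))
          (max_le_max hab le_rfl)
      have hu_bdd : BddBelow (Set.range u) := by
        refine ⟨Vstar, ?_⟩
        rintro y ⟨t, rfl⟩
        exact le_of_lt (habove _ (le_max_right t 0))
      have hL : Tendsto u atTop (nhds (⨅ t, u t)) := tendsto_atTop_ciInf hu_anti hu_bdd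
      set L := ⨅ t, u t with hL_def
      have hxu : x =ᶠ[atTop] u :=
        eventually_atTop.2 ⟨0, fun t ht => by simp [hu_def, max_eq_left ht]⟩
      have hxL : Tendsto x atTop (nhds L) := hL.congr' hxu.symm
      have hVL : Vstar ≤ L :=
        le_ciInf fun t => le_of_lt (habove _ (le_max_right t 0))
      rcases eq_or_lt_of_le hVL with heqL | hltL
      · rwa [← heqL] at hxL
      · exfalso
        have hLmem : L ∈ Set.Ioi (0:ℝ) := lt_trans hVstar hltL
        have hxgtL : ∀ t ≥ (0:ℝ), L < x t := by
          intro t ht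
          have h1 : L ≤ u (t + 1) := ciInf_le hu_bdd (t + 1)
          have h2 : u (t + 1) < x t := by
            have : max (t + 1) 0 = t + 1 := max_eq_left (by linarith)
            rw [hu_def]
            simp only [this]
            exact hanti (Set.mem_Ici.2 ht) (Set.mem_Ici.2 (by linarith : (0:ℝ) ≤ t + 1))
              (by linarith)
          linarith
        have hfL : f L < 0 := by
          have := hf hVmem hLmem hltL
          rwa [hfzero] at this
        set c := γ * (-f L) with hc_def
        have hc : 0 < c := mul_pos hγ (by linarith)
        have hdle : ∀ t ≥ (0:ℝ), deriv x t ≤ -c := by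
          intro t ht
          rw [hx' t ht, hc_def]
          have : f (x t) ≤ f L := le_of_lt (hf hLmem (hpos t ht) (hxgtL t ht))
          nlinarith
        have hlin := lin_bound_aux x hx c hdle
        set T := max 0 ((x 0 - Vstar) / c + 1) with hT_def
        have hT0 : (0:ℝ) ≤ T := le_max_left _ _
        have hT1 : (x 0 - Vstar) / c + 1 ≤ T := le_max_right _ _
        have := hlin T hT0
        have habT := habove T hT0
        have hcT : x 0 - Vstar + c ≤ c * T := by
          have := mul_le_mul_of_nonneg_left hT1 (le_of_lt hc)
          calc x 0 - Vstar + c = c * ((x 0 - Vstar) / c + 1) := by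
                field_simp
          _ ≤ c * T := this
        linarith
    · -- x < Vstar everywhere: x strictly increasing, converges to sup L ≤ Vstar
      have hderiv_pos : ∀ s ∈ Set.Ioi (0:ℝ), 0 < deriv x s := by
        intro s hs
        have hs0 : (0:ℝ) ≤ s := le_of_lt hs
        have : f Vstar < f (x s) := hf (hpos s hs0) hVmem (hbelow s hs0)
        rw [hx' s hs0]
        rw [hfzero] at this
        exact mul_pos hγ this
      have hmono : StrictMonoOn x (Set.Ici (0:ℝ)) :=
        strictMonoOn_of_deriv_pos (convex_Ici 0) hx.continuous.continuousOn
          (fun s hs => hderiv_pos s (by rwa [interior_Ici] at hs))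
      set u : ℝ → ℝ := fun t => x (max t 0) with hu_def
      have hu_mono : Monotone u := fun a b hab =>
        hmono.monotoneOn (Set.mem_Ici.2 (le_max_right a 0)) (Set.mem_Ici.2 (le_max_right b 0))
          (max_le_max hab le_rfl)
      have hu_bdd : BddAbove (Set.range u) := by
        refine ⟨Vstar, ?_⟩
        rintro y ⟨t, rfl⟩
        exact le_of_lt (hbelow _ (le_max_right t 0))
      have hL : Tendsto u atTop (nhds (⨆ t, u t)) := tendsto_atTop_ciSup hu_mono hu_bdd
      set L := ⨆ t, u t with hL_def
      have hxu : x =ᶠ[atTop] u :=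
        eventually_atTop.2 ⟨0, fun t ht => by simp [hu_def, max_eq_left ht]⟩
      have hxL : Tendsto x atTop (nhds L) := hL.congr' hxu.symm
      have hVL : L ≤ Vstar :=
        ciSup_le fun t => le_of_lt (hbelow _ (le_max_right t 0))
      rcases eq_or_lt_of_le hVL with heqL | hltL
      · rwa [heqL] at hxL
      · exfalso
        have hL0 : 0 < L := by
          have : u 0 ≤ L := le_ciSup hu_bdd 0
          have h0 : 0 < u 0 := by
            rw [hu_def]; exact hpos _ (le_max_right 0 0)
          linarith
        have hLmem : L ∈ Set.Ioi (0:ℝ) := hL0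
        have hxltL : ∀ t ≥ (0:ℝ), x t < L := by
          intro t ht
          have h1 : u (t + 1) ≤ L := le_ciSup hu_bdd (t + 1)
          have h2 : x t < u (t + 1) := by
            have hmx : max (t + 1) 0 = t + 1 := max_eq_left (by linarith)
            rw [hu_def]
            simp only [hmx]
            exact hmono (Set.mem_Ici.2 ht) (Set.mem_Ici.2 (by linarith : (0:ℝ) ≤ t + 1))
              (by linarith)
          linarith
        have hfL : 0 < f L := by
          have := hf hLmem hVmem hltL
          rwa [hfzero] at this
        set c := γ * f L with hc_def
        have hc : 0 < c := mul_pos hγ hfL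
        -- apply lin_bound_aux to -x
        have hdle : ∀ t ≥ (0:ℝ), deriv (fun s => -x s) t ≤ -c := by
          intro t ht
          have hdn : deriv (fun s => -x s) t = -deriv x t := ((hx t).hasDerivAt.neg).deriv
          rw [hdn, hx' t ht, hc_def]
          have : f L ≤ f (x t) := le_of_lt (hf (hpos t ht) hLmem (hxltL t ht))
          nlinarith
        have hlin := lin_bound_aux (fun s => -x s) hx.neg c hdle
        set T := max 0 ((Vstar - x 0) / c + 1) with hT_def
        have hT0 : (0:ℝ) ≤ T := le_max_left _ _
        have hT1 : (Vstar - x 0) / c + 1 ≤ T := le_max_right _ _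
        have hxT := hlin T hT0
        have hbT := hbelow T hT0
        have hcT : Vstar - x 0 + c ≤ c * T := by
          have := mul_le_mul_of_nonneg_left hT1 (le_of_lt hc)
          calc Vstar - x 0 + c = c * ((Vstar - x 0) / c + 1) := by field_simp
          _ ≤ c * T := this
        linarith
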